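/- arXiv:2509.05083 — 5 statements merged into one kernel-verified Lean document; each statement's English description precedes it below -/
import Mathlib

section
/- Let H be an infinite-dimensional complex Hilbert space. Then the operator 2·id belongs to the closure, in the strong operator topology, of the set of 2-isometries on H; that is, for every ε > 0 and every finite family of vectors x_1, …, x_k ∈ H there exists a 2-isometry S ∈ B(H) with ‖S x_i − 2 x_i‖ < ε for all i = 1, …, k. -/
open scoped ComplexInnerProductSpace ENNReal

open ContinuousLinearMap


noncomputable def lpShiftFun {ι : Type*} (s : ι → ι) (f : lp (fun _ : ι => ℂ) 2) : ι → ℂ :=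
  Function.extend s ⇑f 0

theorem lpShiftFun_sq {ι : Type*} {s : ι → ι} (hs : Function.Injective s)
    (f : lp (fun _ : ι => ℂ) 2) :
    (fun v => ‖lpShiftFun s f v‖ ^ (2 : ℝ≥0∞).toReal)
      = Function.extend s (fun i => ‖f i‖ ^ (2 : ℝ≥0∞).toReal) 0 := by
  funext v
  unfold lpShiftFun
  by_cases h : ∃ a, s a = v
  · obtain ⟨a, rfl⟩ := h
    rw [hs.extend_apply, hs.extend_apply]
  · rw [Function.extend_apply' _ _ _ h, Function.extend_apply' _ _ _ h]
    simp only [Pi.zero_apply, norm_zero]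
    rw [Real.zero_rpow (by norm_num)]

theorem lpShiftFun_mem {ι : Type*} {s : ι → ι} (hs : Function.Injective s)
    (f : lp (fun _ : ι => ℂ) 2) : Memℓp (lpShiftFun s f) 2 := by
  apply memℓp_gen
  rw [lpShiftFun_sq hs, summable_extend_zero hs]
  exact (lp.memℓp f).summable (by norm_num)

noncomputable def lpShift {ι : Type*} (s : ι → ι) (hs : Function.Injective s) :
    lp (fun _ : ι => ℂ) 2 →ₗᵢ[ℂ] lp (fun _ : ι => ℂ) 2 where
  toFun f := ⟨lpShiftFun s f, lpShiftFun_mem hs f⟩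
  map_add' f g := by
    apply lp.ext
    funext v
    show lpShiftFun s (f + g) v = lpShiftFun s f v + lpShiftFun s g v
    unfold lpShiftFun
    by_cases h : ∃ a, s a = v
    · obtain ⟨a, rfl⟩ := h
      rw [hs.extend_apply, hs.extend_apply, hs.extend_apply, lp.coeFn_add]
      rfl
    · rw [Function.extend_apply' _ _ _ h, Function.extend_apply' _ _ _ h,
        Function.extend_apply' _ _ _ h]
      simp
  map_smul' c f := by
    apply lp.ext
    funext v
    show lpShiftFun s (c • f) v = c • lpShiftFun s f v
    unfold lpShiftFun
    by_cases h : ∃ a, s a = v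
    · obtain ⟨a, rfl⟩ := h
      rw [hs.extend_apply, hs.extend_apply, lp.coeFn_smul]
      rfl
    · rw [Function.extend_apply' _ _ _ h, Function.extend_apply' _ _ _ h]
      simp
  norm_map' f := by
    have h2 : (0:ℝ) < (2 : ℝ≥0∞).toReal := by norm_num
    have hL : ‖(⟨lpShiftFun s f, lpShiftFun_mem hs f⟩ : lp (fun _ : ι => ℂ) 2)‖ ^ (2 : ℝ≥0∞).toReal
        = ‖f‖ ^ (2 : ℝ≥0∞).toReal := by
      rw [lp.norm_rpow_eq_tsum h2, lp.norm_rpow_eq_tsum h2]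
      have step : (∑' v, ‖lpShiftFun s f v‖ ^ (2 : ℝ≥0∞).toReal)
          = ∑' v, Function.extend s (fun i => ‖f i‖ ^ (2 : ℝ≥0∞).toReal) 0 v :=
        tsum_congr (fun v => congrFun (lpShiftFun_sq hs f) v)
      have step2 : (∑' c, Function.extend s (fun i => ‖f i‖ ^ (2 : ℝ≥0∞).toReal) 0 (s c))
          = ∑' v, Function.extend s (fun i => ‖f i‖ ^ (2 : ℝ≥0∞).toReal) 0 v := by
        apply hs.tsum_eq
        intro v hv
        rcases Classical.em (∃ a, s a = v) with h | h
        · exact h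
        · exact absurd (by rw [Function.extend_apply' _ _ _ h]; rfl) hv
      have step3 : (fun c => Function.extend s (fun i => ‖f i‖ ^ (2 : ℝ≥0∞).toReal) 0 (s c))
          = fun c => ‖f c‖ ^ (2 : ℝ≥0∞).toReal := by
        funext c; rw [hs.extend_apply]
      show (∑' v, ‖lpShiftFun s f v‖ ^ (2 : ℝ≥0∞).toReal) = _
      rw [step, ← step2, step3]
    exact Real.rpow_left_injOn (by norm_num : (2 : ℝ≥0∞).toReal ≠ 0)
      (lp.norm_nonneg' _) (lp.norm_nonneg' _) hL

theorem lpShift_single {ι : Type*} [DecidableEq ι] (s : ι → ι) (hs : Function.Injective s)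
    (i : ι) : lpShift s hs (lp.single 2 i 1) = lp.single 2 (s i) 1 := by
  apply lp.ext
  funext v
  rw [show (((lpShift s hs) (lp.single 2 i 1)) : ι → ℂ) = lpShiftFun s (lp.single 2 i 1) from rfl]
  unfold lpShiftFun
  by_cases h : ∃ a, s a = v
  · obtain ⟨a, rfl⟩ := h
    rw [hs.extend_apply]
    by_cases hai : a = i
    · subst hai; rw [lp.single_apply_self, lp.single_apply_self]
    · rw [lp.single_apply_ne _ _ _ hai, lp.single_apply_ne _ _ _ (fun hc => hai (hs hc))]
  · rw [Function.extend_apply' _ _ _ h, lp.single_apply_ne _ _ _ (fun hc => h ⟨i, hc.symm⟩)]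
    rfl

theorem lpShift_apply_not_range {ι : Type*} (s : ι → ι) (hs : Function.Injective s)
    (f : lp (fun _ : ι => ℂ) 2) {v : ι} (hv : ¬ ∃ a, s a = v) :
    (lpShift s hs f : ι → ℂ) v = 0 := by
  show lpShiftFun s f v = 0
  rw [lpShiftFun, Function.extend_apply' _ _ _ hv]
  rfl

open ContinuousLinearMap in
theorem two_isometry_identity {H : Type*} [NormedAddCommGroup H] [InnerProductSpace ℂ H]
    [CompleteSpace H] (J Q : H →L[ℂ] H) (t : ℂ)
    (hJJ : adjoint J * J = 1) (hQJ : Q * J = 0) (hQQ : Q * Q = Q) (hQs : adjoint Q = Q)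
    (ht : star t = t) :
    1 - 2 • (adjoint (J * (1 + t • Q) + Q) * (J * (1 + t • Q) + Q))
      + adjoint (J * (1 + t • Q) + Q) ^ 2 * (J * (1 + t • Q) + Q) ^ 2 = 0 := by
  set u : H →L[ℂ] H := 1 + t • Q with hu
  set S := J * u + Q with hS
  have hJJ' : star J * J = 1 := by rw [star_eq_adjoint]; exact hJJ
  have hQs' : star Q = Q := by rw [star_eq_adjoint]; exact hQs
  have hJQ : star J * Q = 0 := by
    have := congrArg star hQJ
    rwa [star_mul, hQs', star_zero] at this
  have hus : star u = u := by rw [hu, star_add, star_one, star_smul, hQs', ht]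
  have hstarS : star S = Q + u * star J := by
    rw [hS, star_add, star_mul, hus, hQs', add_comm]
  have hQS : Q * S = Q := by
    rw [hS, mul_add, ← mul_assoc, hQJ, zero_mul, zero_add, hQQ]
  have hSQ : star S * Q = Q := by
    rw [hstarS, add_mul, mul_assoc, hJQ, mul_zero, add_zero, hQQ]
  set c2 : ℂ := t + t + t * t with hc2
  have huu : u * u = 1 + c2 • Q := by
    rw [hu, hc2]
    simp only [mul_add, add_mul, one_mul, mul_one, smul_mul_assoc, mul_smul_comm, smul_smul,
      hQQ, add_smul, smul_add]
    module
  have hSS : star S * S = 1 + c2 • Q + Q := by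
    have h1 : Q * (J * u) = 0 := by rw [← mul_assoc, hQJ, zero_mul]
    have h3 : u * star J * (J * u) = u * u := by
      rw [mul_assoc u (star J) (J * u), ← mul_assoc (star J) J u, hJJ', one_mul]
    have h4 : u * star J * Q = 0 := by rw [mul_assoc, hJQ, mul_zero]
    rw [hstarS, hS]
    simp only [mul_add, add_mul, h1, h3, h4, hQQ, huu, zero_add, add_zero]
  have key : star S ^ 2 * S ^ 2 = 1 + c2 • Q + Q + (c2 • Q + Q) := by
    calc star S ^ 2 * S ^ 2 = star S * ((star S * S) * S) := by
          rw [pow_two, pow_two, mul_assoc, ← mul_assoc (star S) S S]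
      _ = star S * (S + (c2 • Q + Q)) := by
          rw [hSS, add_mul, add_mul, one_mul, smul_mul_assoc, hQS, add_assoc]
      _ = 1 + c2 • Q + Q + (c2 • Q + Q) := by
          rw [mul_add, hSS, mul_add, mul_smul_comm, hSQ]
  rw [show ContinuousLinearMap.adjoint S = star S from rfl, hSS, key, two_smul]
  abel

open Finset in
theorem ortho_construction {H : Type*} [NormedAddCommGroup H] [InnerProductSpace ℂ H]
    {d M : ℕ} (p : ℕ → ℝ) (hp_gt : ∀ n, M < n → p n = 0)
    (hpsum : ∑ n ∈ Finset.range (M + 1), (p n) ^ 2 = 1)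
    (G : Fin d → H) (E : Fin d × ℕ → H) (hG : Orthonormal ℂ G) (hE : Orthonormal ℂ E)
    (hGE : ∀ j i, ⟪G j, E i⟫ = 0) :
    ∃ c : Fin d × ℕ → H, Orthonormal ℂ c ∧
      (∀ j, G j = ∑ n ∈ Finset.range (M + 1), ((p n : ℂ)) • c (j, n)) := by
  classical
  have hEG : ∀ i j, ⟪E i, G j⟫ = 0 := fun i j => by
    rw [← inner_conj_symm, hGE, map_zero]
  have hGit := orthonormal_iff_ite.mp hG
  have hEit := orthonormal_iff_ite.mp hE
  set W : Fin d → H := fun j => ∑ m ∈ range (M + 1), (p m : ℂ) • E (j, m) with hW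
  set c : Fin d × ℕ → H :=
    fun i => (p i.2 : ℂ) • G i.1 + (E i - (p i.2 : ℂ) • W i.1) with hc
  have hps : (∑ n ∈ range (M + 1), (p n : ℂ) * (p n : ℂ)) = 1 := by
    rw [← Complex.ofReal_one, ← hpsum]
    push_cast
    exact Finset.sum_congr rfl fun m _ => by ring
  have hEW : ∀ (j : Fin d) (n : ℕ) (j' : Fin d), ⟪E (j, n), W j'⟫
      = if j = j' then (p n : ℂ) else 0 := by
    intro j n j'
    rw [hW]
    simp only
    rw [inner_sum]
    have step : ∀ m ∈ range (M + 1),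
        ⟪E (j, n), (p m : ℂ) • E (j', m)⟫ = if (j, n) = (j', m) then (p m : ℂ) else 0 := by
      intro m _
      rw [inner_smul_right, hEit]
      split_ifs <;> simp
    rw [Finset.sum_congr rfl step]
    by_cases hjj : j = j'
    · subst hjj
      rw [if_pos rfl]
      have h2 : ∀ m : ℕ, ((j, n) = (j, m)) ↔ (n = m) := fun m => by simp
      rw [Finset.sum_congr rfl (fun m _ => if_congr (h2 m) rfl rfl),
        Finset.sum_ite_eq (range (M + 1)) n (fun m => (p m : ℂ))]
      by_cases hn : n ∈ range (M + 1)
      · rw [if_pos hn]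
      · rw [if_neg hn, hp_gt n (by simpa using hn)]
        simp
    · rw [if_neg hjj]
      exact Finset.sum_eq_zero fun m _ => if_neg (by simp [hjj])
  have hWE : ∀ (j j' : Fin d) (n : ℕ), ⟪W j, E (j', n)⟫
      = if j = j' then (p n : ℂ) else 0 := by
    intro j j' n
    rw [← inner_conj_symm, hEW]
    by_cases hjj : j = j'
    · subst hjj; simp [Complex.conj_ofReal]
    · rw [if_neg (fun h => hjj h.symm), if_neg hjj, map_zero]
  have hGW : ∀ (j j' : Fin d), ⟪G j, W j'⟫ = 0 := by
    intro j j'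
    rw [hW]
    simp only
    rw [inner_sum]
    exact Finset.sum_eq_zero fun m _ => by rw [inner_smul_right, hGE, mul_zero]
  have hWG : ∀ (j j' : Fin d), ⟪W j, G j'⟫ = 0 := fun j j' => by
    rw [← inner_conj_symm, hGW, map_zero]
  have hWW : ∀ (j j' : Fin d), ⟪W j, W j'⟫ = if j = j' then 1 else 0 := by
    intro j j'
    conv_lhs => rw [hW]
    simp only
    rw [sum_inner]
    have step : ∀ m ∈ range (M + 1), ⟪(p m : ℂ) • E (j, m), W j'⟫
        = if j = j' then ((p m : ℂ) * (p m : ℂ)) else 0 := by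
      intro m _
      rw [inner_smul_left, hEW, Complex.conj_ofReal]
      split_ifs <;> simp
    rw [Finset.sum_congr rfl step]
    by_cases hjj : j = j'
    · rw [if_pos hjj]
      simp only [hjj, if_true]
      exact hps
    · simp [hjj]
  refine ⟨c, orthonormal_iff_ite.mpr ?_, ?_⟩
  · rintro ⟨j, n⟩ ⟨j', n'⟩
    rw [hc]
    simp only
    simp only [inner_add_left, inner_add_right, inner_sub_left, inner_sub_right,
      inner_smul_left, inner_smul_right, hGit, hEit, hGE, hGW, hEG, hEW, hWG, hWE, hWW,
      Complex.conj_ofReal]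
    by_cases hjj : j = j'
    · subst hjj
      simp only [if_true]
      by_cases hnn : n = n'
      · subst hnn
        simp only [Prod.mk.injEq, true_and, if_true, if_pos rfl]
        ring
      · have hpair : ((j, n) = (j, n')) = False := by simp [hnn]
        simp only [Prod.mk.injEq, true_and, hnn, if_false, hpair]
        ring
    · have hpair : ((j, n) = (j', n')) = False := by simp [hjj]
      simp only [hjj, if_false, hpair]
      ring
  · intro j
    rw [hc]
    simp only
    have step : ∀ n ∈ range (M + 1), (p n : ℂ) • ((p n : ℂ) • G j + (E (j, n) - (p n : ℂ) • W j))
        = ((p n : ℂ) * (p n : ℂ)) • G j + ((p n : ℂ) • E (j, n) - ((p n : ℂ) * (p n : ℂ)) • W j) := by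
      intro n _
      rw [smul_add, smul_sub, smul_smul, smul_smul]
    rw [Finset.sum_congr rfl step, Finset.sum_add_distrib, Finset.sum_sub_distrib,
      ← Finset.sum_smul, ← Finset.sum_smul, hps, one_smul, one_smul, hW]
    simp only
    abel

theorem exists_orthonormal_perp {H : Type*} [NormedAddCommGroup H] [InnerProductSpace ℂ H]
    [CompleteSpace H] (hH : ¬ FiniteDimensional ℂ H) (F : Submodule ℂ H)
    [FiniteDimensional ℂ F] (ι : Type*) [Encodable ι] :
    ∃ E : ι → H, Orthonormal ℂ E ∧ ∀ i, E i ∈ Fᗮ := by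
  classical
  have hFc : ¬ FiniteDimensional ℂ ↥Fᗮ := by
    intro hfin
    have hsup : F ⊔ Fᗮ = ⊤ := Submodule.sup_orthogonal_of_hasOrthogonalProjection
    have : FiniteDimensional ℂ ↥(F ⊔ Fᗮ) := Submodule.finiteDimensional_sup F Fᗮ
    rw [hsup] at this
    exact hH (Submodule.topEquiv.finiteDimensional)
  obtain ⟨w, b, hb⟩ := exists_hilbertBasis ℂ ↥Fᗮ
  have hwinf : w.Infinite := by
    intro hwfin
    apply hFc
    have hdense := b.dense_span
    rw [hb, Subtype.range_coe] at hdense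
    have hspan : FiniteDimensional ℂ (Submodule.span ℂ w) :=
      FiniteDimensional.span_of_finite ℂ hwfin
    have hclosed : IsClosed ((Submodule.span ℂ w : Submodule ℂ ↥Fᗮ) : Set ↥Fᗮ) :=
      Submodule.closed_of_finiteDimensional _
    rw [hclosed.submodule_topologicalClosure_eq] at hdense
    rw [hdense] at hspan
    exact Submodule.topEquiv.finiteDimensional
  have hwemb : ι ↪ w := ⟨fun i => Set.Infinite.natEmbedding w hwinf (Encodable.encode i),
    fun i i' h => Encodable.encode_injective ((Set.Infinite.natEmbedding w hwinf).injective h)⟩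
  have honb : Orthonormal ℂ (fun v : w => (v : ↥Fᗮ)) := by rw [← hb]; exact b.orthonormal
  have hon : Orthonormal ℂ (fun i : ι => ((hwemb i : ↥Fᗮ))) :=
    honb.comp hwemb hwemb.injective
  refine ⟨fun i => ((hwemb i : ↥Fᗮ) : H), ?_, fun i => (hwemb i : ↥Fᗮ).2⟩
  have : (fun i : ι => ((hwemb i : ↥Fᗮ) : H)) = (Fᗮ.subtypeₗᵢ) ∘ (fun i => (hwemb i : ↥Fᗮ)) :=
    rfl
  rw [this]
  exact hon.comp_linearIsometry _



theorem exists_shift_isometry {H : Type*} [NormedAddCommGroup H] [InnerProductSpace ℂ H]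
    [CompleteSpace H] {ι : Type*} (c : ι → H) (hc : Orthonormal ℂ c)
    (next : ι → ι) (hnext : Function.Injective next) :
    ∃ J : H →L[ℂ] H, (∀ x y : H, ⟪J x, J y⟫ = ⟪x, y⟫) ∧ (∀ i, J (c i) = c (next i)) ∧
      (∀ i₀, i₀ ∉ Set.range next → ∀ x, ⟪J x, c i₀⟫ = 0) := by
  classical
  have hcinj : Function.Injective c := hc.linearIndependent.injective
  obtain ⟨w, b, hsub, hb⟩ := hc.toSubtypeRange.exists_hilbertBasis_extension
  set vtx : ι → w := fun i => ⟨c i, hsub ⟨i, rfl⟩⟩ with hvtx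
  have hbv : ∀ v : w, b v = ↑v := fun v => by rw [hb]
  set sw : w → w := fun v =>
    if h : (↑v : H) ∈ Set.range c then ⟨c (next h.choose), hsub ⟨next h.choose, rfl⟩⟩ else v
    with hsw
  have hsw_vtx : ∀ i, sw (vtx i) = vtx (next i) := by
    intro i
    have h : (↑(vtx i) : H) ∈ Set.range c := ⟨i, rfl⟩
    rw [hsw]
    simp only [dif_pos h]
    apply Subtype.ext
    have hspec : c h.choose = ↑(vtx i) := h.choose_spec
    have : h.choose = i := hcinj hspec
    rw [this]
  have hsw_inj : Function.Injective sw := by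
    intro v v' hvv
    rw [hsw] at hvv
    simp only at hvv
    by_cases h1 : (↑v : H) ∈ Set.range c
    · by_cases h2 : (↑v' : H) ∈ Set.range c
      · rw [dif_pos h1, dif_pos h2] at hvv
        have := Subtype.ext_iff.mp hvv
        simp only at this
        have hch : h1.choose = h2.choose := hnext (hcinj this)
        apply Subtype.ext
        rw [← h1.choose_spec, ← h2.choose_spec, hch]
      · rw [dif_pos h1, dif_neg h2] at hvv
        exact absurd (hvv ▸ ⟨next h1.choose, congrArg _ rfl⟩ :
          (↑v' : H) ∈ Set.range c) h2
    · by_cases h2 : (↑v' : H) ∈ Set.range c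
      · rw [dif_neg h1, dif_pos h2] at hvv
        exact absurd (hvv ▸ ⟨next h2.choose, rfl⟩ : (↑v : H) ∈ Set.range c) h1
      · rw [dif_neg h1, dif_neg h2] at hvv
        exact hvv
  have hnotr : ∀ i₀, i₀ ∉ Set.range next → vtx i₀ ∉ Set.range sw := by
    rintro i₀ hi₀ ⟨v, hv⟩
    rw [hsw] at hv
    simp only at hv
    by_cases h : (↑v : H) ∈ Set.range c
    · rw [dif_pos h] at hv
      have := Subtype.ext_iff.mp hv
      simp only at this
      exact hi₀ ⟨h.choose, hcinj this⟩
    · rw [dif_neg h] at hv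
      exact h (hv ▸ ⟨i₀, rfl⟩ : (↑v : H) ∈ Set.range c)
  set J₀ : H →ₗᵢ[ℂ] H :=
    b.repr.symm.toLinearIsometry.comp ((lpShift sw hsw_inj).comp b.repr.toLinearIsometry)
    with hJ₀
  refine ⟨J₀.toContinuousLinearMap, fun x y => J₀.inner_map_map x y, ?_, ?_⟩
  · intro i
    show J₀ (c i) = c (next i)
    rw [hJ₀]
    simp only [LinearIsometry.coe_comp, LinearIsometryEquiv.coe_toLinearIsometry, Function.comp_apply]
    have h1 : c i = b (vtx i) := (hbv (vtx i)).symm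
    rw [h1, b.repr_self, lpShift_single, hsw_vtx, b.repr_symm_single, hbv]
  · intro i₀ hi₀ x
    show (inner ℂ (J₀ x) (c i₀) : ℂ) = 0
    rw [← inner_conj_symm]
    have h1 : c i₀ = b (vtx i₀) := (hbv (vtx i₀)).symm
    have h2 : (inner ℂ (c i₀) (J₀ x) : ℂ) = b.repr (J₀ x) (vtx i₀) := by
      rw [h1, b.repr_apply_apply]
    rw [h2]
    have h3 : b.repr (J₀ x) = lpShift sw hsw_inj (b.repr x) := by
      rw [hJ₀]
      simp only [LinearIsometry.coe_comp, LinearIsometryEquiv.coe_toLinearIsometry, Function.comp_apply]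
      exact b.repr.apply_symm_apply _
    rw [h3, lpShift_apply_not_range sw hsw_inj (b.repr x)
      (by intro ⟨a, ha⟩; exact hnotr i₀ hi₀ ⟨a, ha⟩)]
    simp

open Finset in
theorem telescope {H : Type*} [NormedAddCommGroup H] [InnerProductSpace ℂ H]
    {d M : ℕ} (hM : 1 ≤ M) (a σ : ℝ) (p : ℕ → ℝ)
    (hp0 : p 0 = a) (hpM : p M = a) (hp1 : 2 * p 1 = σ * a)
    (hpstep : ∀ n, 1 ≤ n → n + 1 ≤ M → p n = 2 * p (n + 1))
    (c : Fin d × ℕ → H) (S : H →L[ℂ] H) (j : Fin d)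
    (hSc0 : S (c (j, 0)) = c (j, 0) + (σ : ℂ) • c (j, 1))
    (hScn : ∀ n : ℕ, S (c (j, n + 1)) = c (j, n + 2)) :
    S (∑ n ∈ range (M + 1), (p n : ℂ) • c (j, n))
      - (2 : ℂ) • (∑ n ∈ range (M + 1), (p n : ℂ) • c (j, n))
      = (a : ℂ) • c (j, M + 1) - (a : ℂ) • c (j, 0) := by
  have key : ∀ N, 1 ≤ N → N ≤ M →
      ∑ i ∈ range N, ((p (i + 1) : ℂ) • c (j, i + 2)
          - ((2 : ℂ) * (p (i + 1) : ℂ)) • c (j, i + 1))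
        = (p N : ℂ) • c (j, N + 1) - ((2 : ℂ) * (p 1 : ℂ)) • c (j, 1) := by
    intro N hN1 hNM
    induction N, hN1 using Nat.le_induction with
    | base => rw [Finset.sum_range_one]
    | succ N hN ih =>
      rw [Finset.sum_range_succ, ih (le_of_lt (Nat.lt_of_succ_le hNM))]
      have hpN : (p N : ℂ) = (2 : ℂ) * (p (N + 1) : ℂ) := by
        rw [hpstep N hN hNM]; push_cast; ring
      rw [hpN]
      abel
  have expand : S (∑ n ∈ range (M + 1), (p n : ℂ) • c (j, n))
      = ∑ n ∈ range (M + 1), (p n : ℂ) • S (c (j, n)) := by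
    rw [map_sum]
    exact Finset.sum_congr rfl fun n _ => by rw [map_smul]
  rw [expand, Finset.smul_sum]
  rw [Finset.sum_range_succ' (fun n => (p n : ℂ) • S (c (j, n))) M,
    Finset.sum_range_succ' (fun n => (2 : ℂ) • (p n : ℂ) • c (j, n)) M]
  simp only [hScn, hSc0]
  have h2p : ∀ n : ℕ, (2 : ℂ) • (p n : ℂ) • c (j, n) = ((2 : ℂ) * (p n : ℂ)) • c (j, n) :=
    fun n => by rw [smul_smul]
  calc (∑ i ∈ range M, (p (i + 1) : ℂ) • c (j, i + 2)) + (p 0 : ℂ) • (c (j, 0) + (σ : ℂ) • c (j, 1))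
      - ((∑ i ∈ range M, (2 : ℂ) • (p (i + 1) : ℂ) • c (j, i + 1)) + (2 : ℂ) • (p 0 : ℂ) • c (j, 0))
      = (∑ i ∈ range M, ((p (i + 1) : ℂ) • c (j, i + 2) - ((2 : ℂ) * (p (i + 1) : ℂ)) • c (j, i + 1)))
        + (p 0 : ℂ) • (c (j, 0) + (σ : ℂ) • c (j, 1)) - ((2 : ℂ) * (p 0 : ℂ)) • c (j, 0) := by
        rw [Finset.sum_sub_distrib]
        simp only [h2p]
        abel
    _ = (p M : ℂ) • c (j, M + 1) - ((2 : ℂ) * (p 1 : ℂ)) • c (j, 1)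
        + (p 0 : ℂ) • (c (j, 0) + (σ : ℂ) • c (j, 1)) - ((2 : ℂ) * (p 0 : ℂ)) • c (j, 0) := by
        rw [key M hM le_rfl]
    _ = (a : ℂ) • c (j, M + 1) - (a : ℂ) • c (j, 0) := by
        rw [hpM, hp0, smul_add]
        have h1 : ((2 : ℂ) * (a : ℂ)) • c (j, 0) = (a : ℂ) • c (j, 0) + (a : ℂ) • c (j, 0) := by
          rw [← add_smul]; ring_nf
        have h2 : ((2 : ℂ) * (p 1 : ℂ)) • c (j, 1) = (a : ℂ) • ((σ : ℂ) • c (j, 1)) := by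
          rw [smul_smul]
          congr 1
          have hcast : ((2 * p 1 : ℝ) : ℂ) = ((σ * a : ℝ) : ℂ) := by rw [hp1]
          push_cast at hcast
          linear_combination hcast
        rw [h1, h2]
        abel

open ContinuousLinearMap

set_option maxHeartbeats 1000000 in
/-- On an infinite-dimensional complex Hilbert space, the operator `2 • id` lies in the
closure of the set of 2-isometries in the strong operator topology. -/
theorem twoId_mem_SOT_closure_of_two_isometries {H : Type*} [NormedAddCommGroup H]
    [InnerProductSpace ℂ H] [CompleteSpace H] (hH : ¬ FiniteDimensional ℂ H) :
    ∀ ε : ℝ, 0 < ε → ∀ (k : ℕ) (x : Fin k → H),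
      ∃ S : H →L[ℂ] H,
        (1 - 2 • (adjoint S * S) + adjoint S ^ 2 * S ^ 2 = 0) ∧
        ∀ i, ‖S (x i) - (2 : ℂ) • x i‖ < ε := by
  classical
  intro ε hε k x
  set F : Submodule ℂ H := Submodule.span ℂ (Set.range x) with hF
  have hFfin : FiniteDimensional ℂ F := FiniteDimensional.span_of_finite ℂ (Set.finite_range x)
  set d : ℕ := Module.finrank ℂ F with hd
  set R : ℝ := 1 + ∑ i, ‖x i‖ with hR
  have hsum0 : (0:ℝ) ≤ ∑ i, ‖x i‖ := Finset.sum_nonneg fun _ _ => norm_nonneg _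
  have hRpos : 0 < R := by rw [hR]; linarith
  have hxR : ∀ i, ‖x i‖ ≤ R := by
    intro i
    have h1 : ‖x i‖ ≤ ∑ i', ‖x i'‖ :=
      Finset.single_le_sum (f := fun i' => ‖x i'‖) (fun _ _ => norm_nonneg _)
        (Finset.mem_univ i)
    rw [hR]; linarith
  obtain ⟨N, hN⟩ := pow_unbounded_of_one_lt (R := ℝ) (4 * d * R / ε) one_lt_two
  set M : ℕ := N + 1 with hMdef
  have hM1 : 1 ≤ M := by omega
  have h2M : 4 * d * R / ε < 2 ^ M := by
    refine hN.trans_le ?_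
    exact pow_le_pow_right₀ (by norm_num) (by omega)
  have h2Mpos : (0:ℝ) < 2 ^ M := by positivity
  have h4M2 : (0:ℝ) < 4 ^ M + 2 := by positivity
  -- the weight sequence
  set a : ℝ := Real.sqrt (3 / (4 ^ M + 2)) with ha
  have ha2 : a ^ 2 = 3 / (4 ^ M + 2) := Real.sq_sqrt (by positivity)
  have hapos : 0 < a := Real.sqrt_pos.mpr (by positivity)
  set σr : ℝ := 2 ^ M with hσ
  set p : ℕ → ℝ := fun n => if n = 0 then a else if n ≤ M then 2 ^ (M - n) * a else 0 with hp
  have hp_gt : ∀ n, M < n → p n = 0 := by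
    intro n h
    have h0 : n ≠ 0 := by omega
    have h1 : ¬ n ≤ M := by omega
    simp [hp, h0, h1]
  have hp0 : p 0 = a := by simp [hp]
  have hpM : p M = a := by
    have h0 : M ≠ 0 := by omega
    simp [hp, h0, Nat.sub_self]
  have hp1 : 2 * p 1 = σr * a := by
    have h1 : (1:ℕ) ≤ M := hM1
    have hM' : M - 1 + 1 = M := by omega
    have : p 1 = 2 ^ (M - 1) * a := by simp [hp, h1]
    rw [this, hσ]
    calc 2 * (2 ^ (M - 1) * a) = 2 ^ (M - 1) * 2 * a := by ring
      _ = 2 ^ (M - 1 + 1) * a := by rw [pow_succ]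
      _ = 2 ^ M * a := by rw [hM']
  have hpstep : ∀ n, 1 ≤ n → n + 1 ≤ M → p n = 2 * p (n + 1) := by
    intro n h1 hn1
    have h0 : n ≠ 0 := by omega
    have h0' : n + 1 ≠ 0 := by omega
    have hle : n ≤ M := by omega
    have hle' : n + 1 ≤ M := hn1
    have he : M - n = (M - (n + 1)) + 1 := by omega
    simp only [hp, h0, h0', hle, hle', if_false, if_true, if_neg, ite_true]
    rw [he, pow_succ]
    ring
  have hpsum : ∑ n ∈ Finset.range (M + 1), p n ^ 2 = 1 := by
    rw [Finset.sum_range_succ' (fun n => p n ^ 2) M]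
    have hterm : ∀ i ∈ Finset.range M, p (i + 1) ^ 2 = 4 ^ (M - 1 - i) * a ^ 2 := by
      intro i hi
      have hi' : i < M := Finset.mem_range.mp hi
      have h0 : i + 1 ≠ 0 := by omega
      have hle : i + 1 ≤ M := by omega
      have he : M - (i + 1) = M - 1 - i := by omega
      simp only [hp, h0, hle, if_false, if_true, ite_true, if_neg]
      rw [mul_pow, ← pow_right_comm, he]
      norm_num
    rw [Finset.sum_congr rfl hterm, hp0]
    have hrefl : ∑ i ∈ Finset.range M, (4:ℝ) ^ (M - 1 - i) * a ^ 2
        = (∑ i ∈ Finset.range M, (4:ℝ) ^ i) * a ^ 2 := by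
      rw [← Finset.sum_mul]
      congr 1
      exact Finset.sum_range_reflect (fun i => (4:ℝ) ^ i) M
    rw [hrefl, geom_sum_eq (by norm_num : (4:ℝ) ≠ 1) M, ha2]
    field_simp
    ring
  have haM : a ≤ 2 / 2 ^ M := by
    have h4 : ((2:ℝ) / 2 ^ M) ^ 2 = 4 / 4 ^ M := by
      rw [div_pow, ← pow_right_comm]
      norm_num
    have h1 : (3:ℝ) / (4 ^ M + 2) ≤ (2 / 2 ^ M) ^ 2 := by
      rw [h4, div_le_div_iff₀ h4M2 (by positivity)]
      nlinarith [pow_pos (show (0:ℝ) < 4 by norm_num) M]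
    calc a ≤ Real.sqrt ((2 / 2 ^ M) ^ 2) := Real.sqrt_le_sqrt h1
      _ = 2 / 2 ^ M := Real.sqrt_sq (by positivity)
  -- orthonormal families
  set gF : OrthonormalBasis (Fin d) ℂ F := stdOrthonormalBasis ℂ F with hgF
  set G : Fin d → H := fun j => ((gF j : F) : H) with hG
  have hGon : Orthonormal ℂ G := by
    have : G = (F.subtypeₗᵢ) ∘ gF := rfl
    rw [this]
    exact gF.orthonormal.comp_linearIsometry _
  obtain ⟨E, hEon, hEperp⟩ := exists_orthonormal_perp hH F (Fin d × ℕ)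
  have hGE : ∀ j i, ⟪G j, E i⟫ = 0 := fun j i =>
    (Submodule.mem_orthogonal F (E i)).mp (hEperp i) (G j) (SetLike.coe_mem _)
  obtain ⟨c, hcon, hGsum⟩ := ortho_construction p hp_gt hpsum G E hGon hEon hGE
  have hcit := orthonormal_iff_ite.mp hcon
  -- the shift isometry
  set next : Fin d × ℕ → Fin d × ℕ := fun i => (i.1, i.2 + 1) with hnext
  have hnextinj : Function.Injective next := by
    rintro ⟨j, n⟩ ⟨j', n'⟩ h
    simp only [hnext, Prod.mk.injEq] at h
    exact Prod.ext h.1 (by omega)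
  obtain ⟨J, hJinner, hJc, hJperp⟩ := exists_shift_isometry c hcon next hnextinj
  have hu0notr : ∀ j : Fin d, (j, 0) ∉ Set.range next := by
    rintro j ⟨⟨j', n'⟩, hcontra⟩
    simp only [hnext, Prod.mk.injEq] at hcontra
    omega
  -- the projection Q
  set u : Fin d → H := fun j => c (j, 0) with hu
  set Q : H →L[ℂ] H := ∑ j : Fin d, (innerSL ℂ (u j)).smulRight (u j) with hQ
  have hQapply : ∀ y, Q y = ∑ j : Fin d, ⟪u j, y⟫ • u j := by
    intro y
    rw [hQ]
    rw [ContinuousLinearMap.sum_apply]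
    exact Finset.sum_congr rfl fun j _ => by
      rw [ContinuousLinearMap.smulRight_apply, innerSL_apply_apply]
  have hQc : ∀ (j : Fin d) (n : ℕ), Q (c (j, n)) = if n = 0 then c (j, 0) else 0 := by
    intro j n
    rw [hQapply]
    have hterm : ∀ j' : Fin d,
        (⟪u j', c (j, n)⟫ : ℂ) • u j' = if (j', (0:ℕ)) = (j, n) then u j' else 0 := by
      intro j'
      rw [hu]
      simp only
      rw [hcit]
      split_ifs <;> simp
    rw [Finset.sum_congr rfl fun j' _ => hterm j']
    by_cases hn : n = 0
    · subst hn
      have : ∀ j' : Fin d, ((j', (0:ℕ)) = (j, 0)) ↔ (j' = j) := by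
        intro j'; simp
      rw [if_pos rfl]
      calc ∑ j' : Fin d, (if (j', (0:ℕ)) = (j, 0) then u j' else 0)
          = ∑ j' : Fin d, (if j' = j then u j' else 0) :=
            Finset.sum_congr rfl fun j' _ => if_congr (this j') rfl rfl
        _ = u j := by rw [Finset.sum_ite_eq' Finset.univ j u]; simp
    · rw [if_neg hn]
      exact Finset.sum_eq_zero fun j' _ => if_neg (by simp [hn]; omega)
  have hQs : adjoint Q = Q := by
    symm
    rw [ContinuousLinearMap.eq_adjoint_iff]
    intro y z
    rw [hQapply y, hQapply z, sum_inner, inner_sum]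
    refine Finset.sum_congr rfl fun j _ => ?_
    rw [inner_smul_left, inner_smul_right, ← inner_conj_symm (u j) y, Complex.conj_conj]
    ring
  have hQQ : Q * Q = Q := by
    ext y
    rw [ContinuousLinearMap.mul_apply]
    conv_lhs => rw [hQapply y]
    rw [map_sum]
    conv_rhs => rw [hQapply y]
    refine Finset.sum_congr rfl fun j _ => ?_
    rw [map_smul]
    have : Q (u j) = u j := by
      have := hQc j 0
      simpa [hu] using this
    rw [this]
  have hQJop : Q * J = 0 := by
    ext y
    rw [ContinuousLinearMap.mul_apply, hQapply (J y), ContinuousLinearMap.zero_apply]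
    refine Finset.sum_eq_zero fun j _ => ?_
    have h0 : (⟪J y, u j⟫ : ℂ) = 0 := hJperp (j, 0) (hu0notr j) y
    have : (⟪u j, J y⟫ : ℂ) = 0 := by
      rw [← inner_conj_symm, h0, map_zero]
    rw [this, zero_smul]
  have hJJ : adjoint J * J = 1 := by
    ext y
    apply ext_inner_right ℂ
    intro z
    rw [ContinuousLinearMap.mul_apply, ContinuousLinearMap.one_apply, adjoint_inner_left]
    exact hJinner y z
  set t : ℂ := ((σr - 1 : ℝ) : ℂ) with ht
  have hts : star t = t := by
    rw [ht, Complex.star_def, Complex.conj_ofReal]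
  refine ⟨J * (1 + t • Q) + Q, two_isometry_identity J Q t hJJ hQJop hQQ hQs hts, ?_⟩
  set S : H →L[ℂ] H := J * (1 + t • Q) + Q with hS
  have hSapp : ∀ y, S y = J y + t • J (Q y) + Q y := by
    intro y
    rw [hS]
    rw [ContinuousLinearMap.add_apply, ContinuousLinearMap.mul_apply,
      ContinuousLinearMap.add_apply, ContinuousLinearMap.one_apply,
      ContinuousLinearMap.smul_apply, map_add, map_smul]
  have hσt : (1 : ℂ) + t = (σr : ℂ) := by
    rw [ht]; push_cast; ring
  have hSc0 : ∀ j : Fin d, S (c (j, 0)) = c (j, 0) + (σr : ℂ) • c (j, 1) := by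
    intro j
    rw [hSapp]
    have h1 : Q (c (j, 0)) = c (j, 0) := by simpa using hQc j 0
    have h2 : J (c (j, 0)) = c (j, 1) := by
      have := hJc (j, 0)
      simpa [hnext] using this
    rw [h1, h2]
    rw [show c (j, 1) + t • c (j, 1) + c (j, 0)
        = c (j, 0) + ((1 : ℂ) + t) • c (j, 1) by rw [add_smul, one_smul]; abel]
    rw [hσt]
  have hScn : ∀ (j : Fin d) (n : ℕ), S (c (j, n + 1)) = c (j, n + 2) := by
    intro j n
    rw [hSapp]
    have h1 : Q (c (j, n + 1)) = 0 := by simpa using hQc j (n + 1)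
    have h2 : J (c (j, n + 1)) = c (j, n + 2) := by
      have := hJc (j, n + 1)
      simpa [hnext] using this
    rw [h1, h2, map_zero, smul_zero, add_zero, add_zero]
  have hSG : ∀ j : Fin d, S (G j) - (2 : ℂ) • G j
      = (a : ℂ) • c (j, M + 1) - (a : ℂ) • c (j, 0) := by
    intro j
    have htel := telescope hM1 a σr p hp0 hpM hp1 hpstep c S j (hSc0 j) (hScn j)
    rw [← hGsum j] at htel
    exact htel
  have hSGnorm : ∀ j : Fin d, ‖S (G j) - (2 : ℂ) • G j‖ ≤ 2 * a := by
    intro j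
    rw [hSG j]
    have hc1 : ‖c (j, M + 1)‖ = 1 := hcon.1 (j, M + 1)
    have hc0 : ‖c (j, 0)‖ = 1 := hcon.1 (j, 0)
    calc ‖(a : ℂ) • c (j, M + 1) - (a : ℂ) • c (j, 0)‖
        ≤ ‖(a : ℂ) • c (j, M + 1)‖ + ‖(a : ℂ) • c (j, 0)‖ := norm_sub_le _ _
      _ = ‖(a : ℂ)‖ * ‖c (j, M + 1)‖ + ‖(a : ℂ)‖ * ‖c (j, 0)‖ := by
          rw [norm_smul, norm_smul]
      _ = 2 * a := by
          rw [hc1, hc0, Complex.norm_real]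
          rw [Real.norm_eq_abs, abs_of_pos hapos]
          ring
  intro i
  have hxF : x i ∈ F := Submodule.subset_span (Set.mem_range_self i)
  set xF : F := ⟨x i, hxF⟩ with hxFdef
  have hxdecomp : x i = ∑ j : Fin d, gF.repr xF j • G j := by
    have h2 : (∑ j : Fin d, gF.repr xF j • gF j) = xF := gF.sum_repr xF
    calc x i = ((xF : F) : H) := rfl
      _ = ((∑ j : Fin d, gF.repr xF j • gF j : F) : H) := by rw [h2]
      _ = ∑ j : Fin d, gF.repr xF j • G j := by
          rw [show (((∑ j : Fin d, gF.repr xF j • gF j : F)) : H)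
              = F.subtype (∑ j : Fin d, gF.repr xF j • gF j) from rfl, map_sum]
          exact Finset.sum_congr rfl fun j _ => by rw [map_smul]; rfl
  have hαbound : ∀ j : Fin d, ‖gF.repr xF j‖ ≤ R := by
    intro j
    rw [gF.repr_apply_apply]
    calc ‖(⟪gF j, xF⟫ : ℂ)‖ ≤ ‖gF j‖ * ‖xF‖ := norm_inner_le_norm _ _
      _ = ‖x i‖ := by rw [gF.orthonormal.1 j, one_mul]; rfl
      _ ≤ R := hxR i
  have hdecomp2 : S (x i) - (2 : ℂ) • x i
      = ∑ j : Fin d, gF.repr xF j • (S (G j) - (2 : ℂ) • G j) := by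
    conv_lhs => rw [hxdecomp]
    rw [map_sum, Finset.smul_sum, ← Finset.sum_sub_distrib]
    refine Finset.sum_congr rfl fun j _ => ?_
    rw [map_smul, smul_sub, smul_comm]
  rw [hdecomp2]
  calc ‖∑ j : Fin d, gF.repr xF j • (S (G j) - (2 : ℂ) • G j)‖
      ≤ ∑ j : Fin d, ‖gF.repr xF j • (S (G j) - (2 : ℂ) • G j)‖ :=
        norm_sum_le _ _
    _ ≤ ∑ _j : Fin d, R * (2 * a) := by
        refine Finset.sum_le_sum fun j _ => ?_
        rw [norm_smul]
        exact mul_le_mul (hαbound j) (hSGnorm j) (norm_nonneg _) hRpos.le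
    _ = d * (R * (2 * a)) := by
        rw [Finset.sum_const, Finset.card_univ, Fintype.card_fin, nsmul_eq_mul]
    _ ≤ d * (R * (2 * (2 / 2 ^ M))) := by
        have h1 : R * (2 * a) ≤ R * (2 * (2 / 2 ^ M)) := by
          apply mul_le_mul_of_nonneg_left _ hRpos.le
          linarith [haM]
        exact mul_le_mul_of_nonneg_left h1 (Nat.cast_nonneg d)
    _ = 4 * d * R / 2 ^ M := by field_simp; ring
    _ < ε := by
        rw [div_lt_iff₀ h2Mpos]
        rw [div_lt_iff₀ hε] at h2M
        nlinarith [h2M, h2Mpos, hε]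
end

section
/- Let T be a 2-isometry on a complex Hilbert space H. Then for every natural number n ≥ 1 one has T*T ≥ (n/(n+1))·id in the order on self-adjoint operators, i.e. ‖Tx‖² ≥ (n/(n+1))·‖x‖² for all x ∈ H. -/
open ContinuousLinearMap

/-- For a 2-isometry `T` on a complex Hilbert space and every `n ≥ 1`,
one has `T*T ≥ (n/(n+1)) • id`, i.e. `‖Tx‖² ≥ (n/(n+1))‖x‖²` for all `x`. -/
theorem two_isometry_lower_bound {H : Type*} [NormedAddCommGroup H] [InnerProductSpace ℂ H]
    [CompleteSpace H] (T : H →L[ℂ] H)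
    (hT : 1 - 2 • (adjoint T * T) + adjoint T ^ 2 * T ^ 2 = 0) :
    ∀ n : ℕ, 1 ≤ n → ∀ x : H, (n : ℝ) / (n + 1) * ‖x‖ ^ 2 ≤ ‖T x‖ ^ 2 := by
  -- key pointwise identity
  have key : ∀ y : H, ‖T (T y)‖ ^ 2 = 2 * ‖T y‖ ^ 2 - ‖y‖ ^ 2 := by
    intro y
    have h0 := congrArg (fun S : H →L[ℂ] H => inner ℂ (S y) y : (H →L[ℂ] H) → ℂ) hT
    simp only [add_apply, sub_apply, smul_apply, one_apply_eq_self, mul_apply_eq_comp, zero_apply,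
      pow_two, inner_zero_left, two_smul, inner_add_left, inner_sub_left, inner_smul_left] at h0
    have h1 : (inner ℂ (adjoint T (T y)) y : ℂ) = inner ℂ (T y) (T y) := adjoint_inner_left T _ _
    have h2 : (inner ℂ (adjoint T (adjoint T (T (T y)))) y : ℂ)
        = inner ℂ (T (T y)) (T (T y)) := by
      rw [adjoint_inner_left, adjoint_inner_left]
    rw [h1, h2, inner_self_eq_norm_sq_to_K (𝕜 := ℂ), inner_self_eq_norm_sq_to_K (𝕜 := ℂ),
      inner_self_eq_norm_sq_to_K (𝕜 := ℂ)] at h0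
    have : (‖y‖ ^ 2 : ℝ) - (‖T y‖ ^ 2 + ‖T y‖ ^ 2) + ‖T (T y)‖ ^ 2 = 0 := by
      rw [← RCLike.ofReal_eq_zero (K := ℂ)]; push_cast; linear_combination h0
    linarith
  intro n hn x
  have ind : ∀ k : ℕ, ‖(⇑T)^[k] x‖ ^ 2 = ‖x‖ ^ 2 + (k : ℝ) * (‖T x‖ ^ 2 - ‖x‖ ^ 2) ∧
      ‖(⇑T)^[k+1] x‖ ^ 2 = ‖x‖ ^ 2 + ((k : ℝ) + 1) * (‖T x‖ ^ 2 - ‖x‖ ^ 2) := by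
    intro k
    induction k with
    | zero => simp
    | succ m ih =>
      obtain ⟨h1, h2⟩ := ih
      constructor
      · rw [h2]; push_cast; ring
      · have e : (⇑T)^[m+2] x = T (T ((⇑T)^[m] x)) := by
          rw [Function.iterate_succ_apply' (⇑T) (m+1), Function.iterate_succ_apply' (⇑T) m]
        have h2' : ‖T ((⇑T)^[m] x)‖ ^ 2 = ‖x‖ ^ 2 + ((m : ℝ) + 1) * (‖T x‖ ^ 2 - ‖x‖ ^ 2) := by
          rw [← Function.iterate_succ_apply' (⇑T) m x]; exact h2
        rw [e, key, h2', h1]; push_cast; ring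
  have hnn := (ind (n+1)).1
  push_cast at hnn
  have hge : (0:ℝ) ≤ ‖x‖ ^ 2 + ((n:ℝ) + 1) * (‖T x‖ ^ 2 - ‖x‖ ^ 2) := by
    rw [← hnn]; positivity
  have hpos : (0:ℝ) < (n:ℝ) + 1 := by positivity
  rw [div_mul_eq_mul_div, div_le_iff₀ hpos]
  nlinarith [sq_nonneg ‖x‖, sq_nonneg ‖T x‖]
end

section
/- Let L and K be complex Hilbert spaces, let R : L → L be an isometric bounded linear operator and let V : K → L be a bounded linear operator with R*V = 0. Then the block operator B = [[R, V], [0, id_K]] on the Hilbert space direct sum L ⊕ K, defined by B(l ⊕ k) = (R l + V k) ⊕ k, is a 2-isometry. -/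
open ContinuousLinearMap

/-- If `R : L → L` is an isometry and `V : K → L` satisfies `R*V = 0`, then the block
operator `B = [[R, V], [0, id]]` on the Hilbert space direct sum `L ⊕ K`, i.e.
`B (l ⊕ k) = (R l + V k) ⊕ k`, is a 2-isometry. -/
theorem block_operator_two_isometry {L K : Type*}
    [NormedAddCommGroup L] [InnerProductSpace ℂ L] [CompleteSpace L]
    [NormedAddCommGroup K] [InnerProductSpace ℂ K] [CompleteSpace K]
    (R : L →L[ℂ] L) (hR : ∀ l : L, ‖R l‖ = ‖l‖)
    (V : K →L[ℂ] L) (hRV : (adjoint R).comp V = 0)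
    (B : WithLp 2 (L × K) →L[ℂ] WithLp 2 (L × K))
    (hB : ∀ p : WithLp 2 (L × K), B p =
      (WithLp.equiv 2 (L × K)).symm
        (R ((WithLp.equiv 2 (L × K)) p).1 + V ((WithLp.equiv 2 (L × K)) p).2,
          ((WithLp.equiv 2 (L × K)) p).2)) :
    1 - 2 • (adjoint B * B) + adjoint B ^ 2 * B ^ 2 = 0 := by
  -- R preserves inner products
  have hRi : ∀ a b : L, inner (𝕜 := ℂ) (R a) (R b) = inner (𝕜 := ℂ) a b := by
    intro a b
    exact (LinearIsometry.mk R.toLinearMap hR).inner_map_map a b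
  -- range of V is orthogonal to range of R
  have hVR : ∀ (k : K) (l : L), inner (𝕜 := ℂ) (V k) (R l) = 0 := by
    intro k l
    have h0 : adjoint R (V k) = 0 := by
      have := congrFun (congrArg DFunLike.coe hRV) k
      simpa using this
    rw [← adjoint_inner_left, h0, inner_zero_left]
  have hRVo : ∀ (l : L) (k : K), inner (𝕜 := ℂ) (R l) (V k) = 0 := by
    intro l k
    rw [← inner_conj_symm, hVR, map_zero]
  -- key: the quadratic form vanishes
  set T : WithLp 2 (L × K) →L[ℂ] WithLp 2 (L × K) :=
    1 - 2 • (adjoint B * B) + adjoint B ^ 2 * B ^ 2 with hT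
  have key : ∀ x : WithLp 2 (L × K), inner (𝕜 := ℂ) (T x) x = 0 := by
    intro x
    have expand : T x
        = x - 2 • (adjoint B (B x)) + adjoint B (adjoint B (B (B x))) := by
      simp [hT, pow_two, mul_apply, sub_apply, add_apply, smul_apply]
    rw [expand, inner_add_left, inner_sub_left, two_smul, inner_add_left,
      adjoint_inner_left, adjoint_inner_left, adjoint_inner_left]
    rw [hB x, hB ((WithLp.equiv 2 (L × K)).symm _)]
    set l := ((WithLp.equiv 2 (L × K)) x).1
    set k := ((WithLp.equiv 2 (L × K)) x).2
    have hx : x = (WithLp.equiv 2 (L × K)).symm (l, k) := rfl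
    rw [hx]
    simp only [WithLp.prod_inner_apply, WithLp.equiv_symm_apply, WithLp.equiv_apply, WithLp.ofLp_toLp,
      Equiv.apply_symm_apply, inner_add_left, inner_add_right, hRi, hVR, hRVo, map_add]
    ring
  have hlin : ((T : WithLp 2 (L × K) →L[ℂ] WithLp 2 (L × K)) :
      WithLp 2 (L × K) →ₗ[ℂ] WithLp 2 (L × K)) = 0 :=
    (inner_map_self_eq_zero _).mp key
  exact ContinuousLinearMap.coe_injective (by rw [hlin]; rfl)
end

section
/- Let H₁ and H₂ be complex Hilbert spaces, let σ > 0 be a real number, let R : H₁ → H₁ and V : H₂ → H₁ be isometric bounded linear operators whose ranges satisfy Im(V) ⊥ Im(R) and Im(V) ⊕ Im(R) = H₁, and let U : H₂ → H₂ be a unitary operator. Then the Brownian unitary, i.e. the block operator [[R, σV], [0, U]] on the Hilbert space direct sum H₁ ⊕ H₂ given by h₁ ⊕ h₂ ↦ (R h₁ + σ·V h₂) ⊕ U h₂, is a 2-isometry. -/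
open ContinuousLinearMap

/-- A Brownian unitary, i.e. the block operator `[[R, σV], [0, U]]` on `H₁ ⊕ H₂` where
`R` and `V` are isometries with `Im V ⊥ Im R`, `Im V ⊕ Im R = H₁`, `σ > 0`, and `U` is
unitary, is a 2-isometry. -/
theorem brownian_unitary_two_isometry {H₁ H₂ : Type*}
    [NormedAddCommGroup H₁] [InnerProductSpace ℂ H₁] [CompleteSpace H₁]
    [NormedAddCommGroup H₂] [InnerProductSpace ℂ H₂] [CompleteSpace H₂]
    (σ : ℝ) (hσ : 0 < σ)
    (R : H₁ →L[ℂ] H₁) (hR : ∀ x : H₁, ‖R x‖ = ‖x‖)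
    (V : H₂ →L[ℂ] H₁) (hV : ∀ x : H₂, ‖V x‖ = ‖x‖)
    (hVR : ∀ (k : H₂) (l : H₁), (inner ℂ (V k) (R l) : ℂ) = 0)
    (hspan : LinearMap.range (V : H₂ →ₗ[ℂ] H₁) ⊔ LinearMap.range (R : H₁ →ₗ[ℂ] H₁) = ⊤)
    (U : H₂ →L[ℂ] H₂) (hU : ∀ x : H₂, ‖U x‖ = ‖x‖) (hUsurj : Function.Surjective U)
    (B : WithLp 2 (H₁ × H₂) →L[ℂ] WithLp 2 (H₁ × H₂))
    (hB : ∀ p : WithLp 2 (H₁ × H₂), B p =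
      (WithLp.equiv 2 (H₁ × H₂)).symm
        (R ((WithLp.equiv 2 (H₁ × H₂)) p).1 + σ • V ((WithLp.equiv 2 (H₁ × H₂)) p).2,
          U ((WithLp.equiv 2 (H₁ × H₂)) p).2)) :
    1 - 2 • (adjoint B * B) + adjoint B ^ 2 * B ^ 2 = 0 := by
  -- cross term vanishes
  have hcross : ∀ (l : H₁) (k : H₂), ‖R l + σ • V k‖ ^ 2 = ‖l‖ ^ 2 + σ ^ 2 * ‖k‖ ^ 2 := by
    intro l k
    have hc : (inner ℂ (R l) (V k) : ℂ) = 0 := by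
      rw [← inner_conj_symm, hVR k l, map_zero]
    have h0 : (inner ℂ (R l) (σ • V k) : ℂ) = 0 := by
      rw [← Complex.coe_smul, inner_smul_right, hc, mul_zero]
    rw [norm_add_sq (𝕜 := ℂ), h0]
    rw [hR, norm_smul, hV]
    simp [mul_pow, abs_of_pos hσ]
  -- norm of B applied
  have hBnorm : ∀ p : WithLp 2 (H₁ × H₂),
      ‖B p‖ ^ 2 = ‖p.fst‖ ^ 2 + σ ^ 2 * ‖p.snd‖ ^ 2 + ‖p.snd‖ ^ 2 := by
    intro p
    rw [hB, WithLp.prod_norm_sq_eq_of_L2]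
    have h1 : ((WithLp.equiv 2 (H₁ × H₂)).symm
        (R ((WithLp.equiv 2 (H₁ × H₂)) p).1 + σ • V ((WithLp.equiv 2 (H₁ × H₂)) p).2,
          U ((WithLp.equiv 2 (H₁ × H₂)) p).2)).fst
        = R p.fst + σ • V p.snd := rfl
    have h2 : ((WithLp.equiv 2 (H₁ × H₂)).symm
        (R ((WithLp.equiv 2 (H₁ × H₂)) p).1 + σ • V ((WithLp.equiv 2 (H₁ × H₂)) p).2,
          U ((WithLp.equiv 2 (H₁ × H₂)) p).2)).snd
        = U p.snd := rfl
    rw [h1, h2, hcross, hU]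
  have key : ∀ p : WithLp 2 (H₁ × H₂),
      (‖p‖:ℝ) ^ 2 - 2 * ‖B p‖ ^ 2 + ‖B (B p)‖ ^ 2 = 0 := by
    intro p
    have hfst : (B p).fst = R p.fst + σ • V p.snd := by rw [hB]; rfl
    have hsnd : (B p).snd = U p.snd := by rw [hB]; rfl
    rw [WithLp.prod_norm_sq_eq_of_L2, hBnorm, hBnorm, hfst, hsnd, hcross, hU]
    ring
  -- reduce operator identity to inner products
  have hz : ∀ x : WithLp 2 (H₁ × H₂),
      (inner ℂ ((1 - 2 • (adjoint B * B) + adjoint B ^ 2 * B ^ 2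
        : WithLp 2 (H₁ × H₂) →L[ℂ] WithLp 2 (H₁ × H₂)) x) x : ℂ) = 0 := by
    intro x
    have := key x
    simp only [add_apply, sub_apply, one_apply_eq_self, smul_apply, mul_apply_eq_comp, pow_succ, pow_zero,
      one_mul]
    rw [inner_add_left, inner_sub_left, two_smul, inner_add_left]
    rw [adjoint_inner_left, adjoint_inner_left, adjoint_inner_left]
    rw [inner_self_eq_norm_sq_to_K, inner_self_eq_norm_sq_to_K, inner_self_eq_norm_sq_to_K]
    norm_cast
    rw [show ‖x‖ ^ 2 - (‖B x‖ ^ 2 + ‖B x‖ ^ 2) + ‖B (B x)‖ ^ 2 = (0:ℝ) by linarith [key x]]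
    exact Complex.ofReal_zero
  have h := (inner_map_self_eq_zero
      (((1 - 2 • (adjoint B * B) + adjoint B ^ 2 * B ^ 2
        : WithLp 2 (H₁ × H₂) →L[ℂ] WithLp 2 (H₁ × H₂)))
        : WithLp 2 (H₁ × H₂) →ₗ[ℂ] WithLp 2 (H₁ × H₂))).mp hz
  ext x
  exact LinearMap.ext_iff.mp h x
end

section
/- Let H be an infinite-dimensional complex Hilbert space. Then the set of 3-isometries on H is dense in B(H) in the strong operator topology; that is, for every T ∈ B(H), every ε > 0 and every finite family of vectors x_1, …, x_k ∈ H there exists a 3-isometry S ∈ B(H) with ‖S x_i − T x_i‖ < ε for all i. -/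
open ContinuousLinearMap

local notation "⟪" x ", " y "⟫" => @inner ℂ _ _ x y

theorem nilsq_combo' {A : Type*} [Ring A] (q r : A) (hq : q * q = 0) (hr : r * r = 0) :
    -1 + 3 • ((1+r) * (1+q)) - 3 • ((1+r)^2 * (1+q)^2) + (1+r)^3 * (1+q)^3 = 0 := by
  have key : ∀ z : A, z * z = 0 → ((1+z)^2 = 1 + 2 • z ∧ (1+z)^3 = 1 + 3 • z) := by
    intro z hz
    have h2 : (1+z)^2 = 1 + 2 • z := by
      rw [sq]
      simp only [mul_add, add_mul, one_mul, mul_one, hz, add_zero, two_smul]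
      abel
    refine ⟨h2, ?_⟩
    rw [pow_succ, h2]
    simp only [add_mul, mul_add, one_mul, mul_one, smul_mul_assoc, hz, smul_zero, add_zero]
    abel
  obtain ⟨h2, h3⟩ := key q hq
  obtain ⟨g2, g3⟩ := key r hr
  rw [h2, h3, g2, g3]
  simp only [mul_add, add_mul, smul_mul_assoc, mul_smul_comm, mul_one, one_mul, smul_smul]
  module

theorem one_add_nilsq_threeIso' {H : Type*} [NormedAddCommGroup H]
    [InnerProductSpace ℂ H] [CompleteSpace H] (Q : H →L[ℂ] H) (hQ : Q * Q = 0) :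
    -1 + 3 • (adjoint (1 + Q) * (1 + Q)) - 3 • (adjoint (1 + Q) ^ 2 * (1 + Q) ^ 2)
      + adjoint (1 + Q) ^ 3 * (1 + Q) ^ 3 = 0 := by
  have hadj : adjoint (1 + Q) = 1 + adjoint Q := by
    rw [map_add]
    congr 1
    rw [one_def, adjoint_id]
  have hr : adjoint Q * adjoint Q = 0 := by
    rw [mul_def, ← adjoint_comp, ← mul_def, hQ, map_zero]
  rw [hadj]
  exact nilsq_combo' Q (adjoint Q) hQ hr

lemma exists_orthonormal_in_orthogonal' {H : Type*} [NormedAddCommGroup H]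
    [InnerProductSpace ℂ H] [CompleteSpace H] (hH : ¬ FiniteDimensional ℂ H)
    (G : Submodule ℂ H) [FiniteDimensional ℂ G] (n : ℕ) :
    ∃ f : Fin n → H, Orthonormal ℂ f ∧ ∀ j, f j ∈ Gᗮ := by
  have hGinf : ¬ FiniteDimensional ℂ ↥Gᗮ := by
    intro hfin
    apply hH
    have hsup : G ⊔ Gᗮ = ⊤ := Submodule.sup_orthogonal_of_hasOrthogonalProjection
    haveI : FiniteDimensional ℂ ↥(G ⊔ Gᗮ) := inferInstance
    rw [hsup] at this
    exact Submodule.topEquiv.finiteDimensional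
  obtain ⟨w, bw, hbw⟩ := exists_hilbertBasis ℂ ↥Gᗮ
  have hw_on : Orthonormal ℂ ((↑) : w → ↥Gᗮ) := by rw [← hbw]; exact bw.orthonormal
  have hw_inf : w.Infinite := by
    by_contra hfin
    rw [Set.not_infinite] at hfin
    apply hGinf
    haveI : FiniteDimensional ℂ (Submodule.span ℂ w) :=
      FiniteDimensional.span_of_finite ℂ hfin
    have hclosed : IsClosed ((Submodule.span ℂ w : Submodule ℂ ↥Gᗮ) : Set ↥Gᗮ) :=
      Submodule.closed_of_finiteDimensional _
    have hdense := bw.dense_span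
    rw [hbw, Subtype.range_coe] at hdense
    rw [hclosed.submodule_topologicalClosure_eq] at hdense
    haveI : FiniteDimensional ℂ (⊤ : Submodule ℂ ↥Gᗮ) := hdense ▸ inferInstance
    exact Submodule.topEquiv.finiteDimensional
  haveI := hw_inf.to_subtype
  let e : Fin n ↪ w := (Fin.valEmbedding.trans (Infinite.natEmbedding w))
  refine ⟨fun j => ((e j : ↥Gᗮ) : H), ?_, fun j => (e j : ↥Gᗮ).2⟩
  have h1 : Orthonormal ℂ (fun j : Fin n => (e j : ↥Gᗮ)) := hw_on.comp e e.injective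
  exact h1.comp_linearIsometry (Gᗮ.subtypeₗᵢ)

/-- On an infinite-dimensional complex Hilbert space, the set of 3-isometries is dense
in `B(H)` in the strong operator topology. -/
theorem three_isometries_SOT_dense {H : Type*} [NormedAddCommGroup H]
    [InnerProductSpace ℂ H] [CompleteSpace H] (hH : ¬ FiniteDimensional ℂ H) :
    ∀ T : H →L[ℂ] H, ∀ ε : ℝ, 0 < ε → ∀ (k : ℕ) (x : Fin k → H),
      ∃ S : H →L[ℂ] H,
        (-1 + 3 • (adjoint S * S) - 3 • (adjoint S ^ 2 * S ^ 2) + adjoint S ^ 3 * S ^ 3 = 0) ∧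
        ∀ i, ‖S (x i) - T (x i)‖ < ε := by
  intro T ε hε k x
  set A : H →L[ℂ] H := T - 1 with hA
  set E : Submodule ℂ H := Submodule.span ℂ (Set.range x) with hE
  haveI : FiniteDimensional ℂ E := FiniteDimensional.span_of_finite ℂ (Set.finite_range x)
  set G : Submodule ℂ H := E ⊔ E.map (A : H →ₗ[ℂ] H) with hG
  haveI : FiniteDimensional ℂ (E.map (A : H →ₗ[ℂ] H)) := Module.Finite.map E _
  haveI : FiniteDimensional ℂ G := Submodule.finiteDimensional_sup _ _
  have hEG : E ≤ G := le_sup_left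
  have hxE : ∀ i, x i ∈ E := fun i => Submodule.subset_span ⟨i, rfl⟩
  -- orthonormal basis of E, seen in H
  set d := Module.finrank ℂ E with hd
  set b := stdOrthonormalBasis ℂ E with hb
  set u : Fin d → H := fun j => ((b j : E) : H) with hu
  have huE : ∀ j, u j ∈ E := fun j => (b j).2
  have hu_orth : Orthonormal ℂ u := b.orthonormal.comp_linearIsometry E.subtypeₗᵢ
  -- orthonormal family in Gᗮ
  obtain ⟨f, hf_orth, hfG⟩ := exists_orthonormal_in_orthogonal' hH G d
  have huf : ∀ j l, ⟪u j, f l⟫ = 0 :=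
    fun j l => Submodule.inner_right_of_mem_orthogonal (hEG (huE j)) (hfG l)
  have hfE : ∀ j, ∀ v ∈ G, ⟪f j, v⟫ = 0 :=
    fun j v hv => Submodule.inner_left_of_mem_orthogonal hv (hfG j)
  -- the operators
  set P : H →L[ℂ] H := ∑ j, (innerSL ℂ (u j)).smulRight (u j) with hP
  set W : H →L[ℂ] H := ∑ j, (innerSL ℂ (u j)).smulRight (f j) with hW
  set R : H →L[ℂ] H := ∑ j, (innerSL ℂ (f j)).smulRight (u j) with hR
  have hPapp : ∀ z, P z = ∑ j, ⟪u j, z⟫ • u j := by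
    intro z; simp [hP, ContinuousLinearMap.sum_apply]
  have hWapp : ∀ z, W z = ∑ j, ⟪u j, z⟫ • f j := by
    intro z; simp [hW, ContinuousLinearMap.sum_apply]
  have hRapp : ∀ z, R z = ∑ j, ⟪f j, z⟫ • u j := by
    intro z; simp [hR, ContinuousLinearMap.sum_apply]
  -- structural identities
  have hPW : ∀ z, P (W z) = 0 := by
    intro z
    rw [hWapp, hPapp]
    simp [inner_sum, inner_smul_right, huf]
  have hRW : ∀ z, R (W z) = P z := by
    intro z
    rw [hWapp, hRapp, hPapp]
    congr 1; funext j
    rw [hf_orth.inner_right_fintype]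
  have hPE : ∀ v, v ∈ E → P v = v := by
    intro v hv
    have h := b.sum_repr' ⟨v, hv⟩
    have h2 := congrArg (Submodule.subtype E) h
    simp only [map_sum, map_smul, Submodule.subtype_apply] at h2
    rw [hPapp]
    have h3 : ∑ j, ⟪u j, v⟫ • u j
        = ∑ j, (inner ℂ (b j) (⟨v, hv⟩ : E) : ℂ) • ((b j : E) : H) :=
      Finset.sum_congr rfl fun j _ => by rw [Submodule.coe_inner]
    rw [h3, h2]
  have hPmem : ∀ z, P z ∈ E := by
    intro z
    rw [hPapp]
    exact Submodule.sum_mem _ fun j _ => Submodule.smul_mem _ _ (huE j)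
  have hRG : ∀ v, v ∈ G → R v = 0 := by
    intro v hv
    rw [hRapp]
    simp [hfE _ v hv]
  have hRAP : ∀ z, R (A (P z)) = 0 := by
    intro z
    apply hRG
    apply le_sup_right (α := Submodule ℂ H)
    exact Submodule.mem_map_of_mem (hPmem z)
  -- constants
  set c : ℝ := 1 + ∑ i, ‖x i‖ with hc
  have hc_pos : 0 < c := by
    have : (0:ℝ) ≤ ∑ i, ‖x i‖ := Finset.sum_nonneg fun i _ => norm_nonneg _
    linarith
  set δ : ℝ := ε / c with hδ
  have hδ_pos : 0 < δ := div_pos hε hc_pos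
  have hδc : (δ : ℂ) ≠ 0 := by exact_mod_cast hδ_pos.ne'
  -- the nilpotent
  set B : H →L[ℂ] H := A.comp P + (δ : ℂ) • W with hB
  set C : H →L[ℂ] H := P - (δ : ℂ)⁻¹ • ((P.comp A).comp R) with hC
  set Q : H →L[ℂ] H := B.comp C with hQ
  have hCB : ∀ z, C (B z) = 0 := by
    intro z
    have hBz : B z = A (P z) + (δ : ℂ) • W z := by simp [hB]
    have h1 : P (B z) = P (A (P z)) := by
      rw [hBz, map_add, map_smul, hPW]; simp
    have h2 : R (B z) = (δ : ℂ) • P z := by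
      rw [hBz, map_add, map_smul, hRW, hRAP]; simp
    have h3 : C (B z) = P (B z) - (δ : ℂ)⁻¹ • (P (A (R (B z)))) := by simp [hC]
    rw [h3, h1, h2, map_smul, map_smul, smul_smul, inv_mul_cancel₀ hδc, one_smul, sub_self]
  have hQQ : Q * Q = 0 := by
    ext z
    have : Q (Q z) = B (C (B (C z))) := by simp [hQ]
    rw [ContinuousLinearMap.mul_apply, this, hCB, map_zero]
    rfl
  refine ⟨1 + Q, one_add_nilsq_threeIso' Q hQQ, ?_⟩
  intro i
  -- compute S xᵢ - T xᵢ = δ • W xᵢ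
  have hRx : R (x i) = 0 := hRG _ (hEG (hxE i))
  have hCx : C (x i) = x i := by
    simp [hC, hRx, hPE _ (hxE i)]
  have hQx : Q (x i) = A (x i) + (δ : ℂ) • W (x i) := by
    simp [hQ, hCx, hB, hPE _ (hxE i)]
  have hdiff : (1 + Q) (x i) - T (x i) = (δ : ℂ) • W (x i) := by
    rw [ContinuousLinearMap.add_apply, ContinuousLinearMap.one_apply, hQx, hA]
    simp [ContinuousLinearMap.sub_apply]
    abel
  rw [hdiff]
  -- norm computation
  have hWnorm : ‖W (x i)‖ = ‖x i‖ := by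
    have hinner : ⟪W (x i), W (x i)⟫ = ⟪x i, x i⟫ := by
      have hPx := hPE _ (hxE i)
      rw [hWapp]
      rw [hf_orth.inner_sum]
      conv_rhs => rw [← hPx, hPapp]
      rw [hu_orth.inner_sum]
    have h2 : (‖W (x i)‖ : ℝ) ^ 2 = (‖x i‖ : ℝ) ^ 2 := by
      rw [← inner_self_eq_norm_sq (𝕜 := ℂ), ← inner_self_eq_norm_sq (𝕜 := ℂ), hinner]
    nlinarith [norm_nonneg (W (x i)), norm_nonneg (x i)]
  rw [norm_smul, hWnorm]
  have hxc : ‖x i‖ < c := by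
    have h1 : ‖x i‖ ≤ ∑ j, ‖x j‖ :=
      Finset.single_le_sum (f := fun j => ‖x j‖) (fun j _ => norm_nonneg _) (Finset.mem_univ i)
    rw [hc]; linarith
  have hnδ : ‖((δ : ℝ) : ℂ)‖ = δ := by
    rw [Complex.norm_real, Real.norm_of_nonneg hδ_pos.le]
  rw [hnδ]
  calc δ * ‖x i‖ < δ * c := by exact mul_lt_mul_of_pos_left hxc hδ_pos
    _ = ε := by rw [hδ]; field_simp
end
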